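/- arXiv:0807.3401 — 4 statements merged into one kernel-verified Lean document; each statement's English description precedes it below -/
import Mathlib

section
/- In any unital *-algebra A over ℂ with elements a, b, c, d satisfying the Heisenberg–Lorentz relations (a,b,c,d pairwise commute, ad − bc = 1, aa* − a*a = −s·c*c, ab* − b*a = −s·c·d*, ac* = c*a, ad* = d*a, bb* − b*b = s(a*a − dd*), bc* = c*b, bd* − d*b = s·c*·a, cc* = c*c, cd* = d*c, dd* − d*d = s·c·c*), the element c*c is central: it commutes with a, b, c, d and with a*, b*, c*, d*. -/
/-- The Heisenberg–Lorentz relations for a quadruple `(a, b, c, d)` in a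
unital `*`-algebra over `ℂ`, with deformation parameter `s : ℝ`. -/
def HLRel {A : Type*} [Ring A] [StarRing A] [Algebra ℂ A] (s : ℝ) (a b c d : A) : Prop :=
  a * b = b * a ∧ a * c = c * a ∧ a * d = d * a ∧
  b * c = c * b ∧ b * d = d * b ∧ c * d = d * c ∧
  a * d - b * c = 1 ∧
  a * star a - star a * a = -((s : ℂ) • (star c * c)) ∧
  a * star b - star b * a = -((s : ℂ) • (c * star d)) ∧
  a * star c = star c * a ∧
  a * star d = star d * a ∧
  b * star b - star b * b = (s : ℂ) • (star a * a - d * star d) ∧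
  b * star c = star c * b ∧
  b * star d - star d * b = (s : ℂ) • (star c * a) ∧
  c * star c = star c * c ∧
  c * star d = star d * c ∧
  d * star d - star d * d = (s : ℂ) • (c * star c)

theorem stmt_7 {A : Type*} [Ring A] [StarRing A] [Algebra ℂ A]
    (s : ℝ) (a b c d : A) (h : HLRel s a b c d) :
    Commute (star c * c) a ∧ Commute (star c * c) b ∧
    Commute (star c * c) c ∧ Commute (star c * c) d ∧
    Commute (star c * c) (star a) ∧ Commute (star c * c) (star b) ∧
    Commute (star c * c) (star c) ∧ Commute (star c * c) (star d) := by
  obtain ⟨hab, hac, had, hbc, hbd, hcd, h1, h2, h3, hacs, hads, h4, hbcs, h5, hccs, hcds, h6⟩ := h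
  have Cca : Commute c a := hac.symm
  have Csca : Commute (star c) a := hacs.symm
  have Ccb : Commute c b := hbc.symm
  have Cscb : Commute (star c) b := hbcs.symm
  have Ccc : Commute c c := Commute.refl c
  have Cscc : Commute (star c) c := hccs.symm
  have Ccd : Commute c d := hcd
  have Cscd : Commute (star c) d := by
    have := congrArg star hcds; simp only [star_mul, star_star] at this; exact this.symm
  have Ccsa : Commute c (star a) := by
    have := Csca.star_star; simpa using this
  have Cscsa : Commute (star c) (star a) := by simpa using Cca.star_star
  have Ccsb : Commute c (star b) := by have := Cscb.star_star; simpa using this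
  have Cscsb : Commute (star c) (star b) := by simpa using Ccb.star_star
  have Ccsc : Commute c (star c) := hccs
  have Cscsc : Commute (star c) (star c) := Commute.refl _
  have Ccsd : Commute c (star d) := hcds
  have Cscsd : Commute (star c) (star d) := by simpa using Ccd.star_star
  exact ⟨Csca.mul_left Cca, Cscb.mul_left Ccb, Cscc.mul_left Ccc, Cscd.mul_left Ccd,
    Cscsa.mul_left Ccsa, Cscsb.mul_left Ccsb, Cscsc.mul_left Ccsc, Cscsd.mul_left Ccsd⟩
end

section
/- Let A be the unital *-algebra generated by a, b, c, d subject to the Heisenberg–Lorentz relations. Then the assignment Δ(a) = a⊗a + b⊗c, Δ(b) = a⊗b + b⊗d, Δ(c) = c⊗a + d⊗c, Δ(d) = c⊗b + d⊗d extends to a *-homomorphism Δ : A → A ⊗ A, i.e., the images Δ(a), Δ(b), Δ(c), Δ(d) again satisfy the Heisenberg–Lorentz relations in A ⊗ A. -/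
open scoped TensorProduct

/-- The Heisenberg–Lorentz relations for a quadruple `(a, b, c, d)` in a unital
ring `B`, relative to a given `*`-operation `st` and real scalar action,
with deformation parameter `s : ℝ`. -/
def HLRelWith {B : Type*} [Ring B] [Module ℝ B] (s : ℝ) (st : B → B) (a b c d : B) : Prop :=
  a * b = b * a ∧ a * c = c * a ∧ a * d = d * a ∧
  b * c = c * b ∧ b * d = d * b ∧ c * d = d * c ∧
  a * d - b * c = 1 ∧
  a * st a - st a * a = -(s • (st c * c)) ∧
  a * st b - st b * a = -(s • (c * st d)) ∧
  a * st c = st c * a ∧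
  a * st d = st d * a ∧
  b * st b - st b * b = s • (st a * a - d * st d) ∧
  b * st c = st c * b ∧
  b * st d - st d * b = s • (st c * a) ∧
  c * st c = st c * c ∧
  c * st d = st d * c ∧
  d * st d - st d * d = s • (c * st c)

/-- The star operation on `A`, as an `ℝ`-linear map. -/
noncomputable def starLM (A : Type*) [Ring A] [StarRing A] [Algebra ℝ A] [StarModule ℝ A] :
    A →ₗ[ℝ] A where
  toFun := star
  map_add' := star_add
  map_smul' r x := by simp

/-- The star operation on the algebraic tensor product `A ⊗ A`,
determined by `(x ⊗ y)* = x* ⊗ y*`. -/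
noncomputable def starTensor (A : Type*) [Ring A] [StarRing A] [Algebra ℝ A] [StarModule ℝ A] :
    A ⊗[ℝ] A → A ⊗[ℝ] A :=
  TensorProduct.map (starLM A) (starLM A)

set_option maxHeartbeats 1600000 in
theorem stmt_9 {A : Type*} [Ring A] [StarRing A] [Algebra ℝ A] [StarModule ℝ A]
    (s : ℝ) (a b c d : A) (h : HLRelWith s (star : A → A) a b c d) :
    HLRelWith s (starTensor A)
      (a ⊗ₜ[ℝ] a + b ⊗ₜ[ℝ] c) (a ⊗ₜ[ℝ] b + b ⊗ₜ[ℝ] d)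
      (c ⊗ₜ[ℝ] a + d ⊗ₜ[ℝ] c) (c ⊗ₜ[ℝ] b + d ⊗ₜ[ℝ] d) := by
  obtain ⟨h1, h2, h3, h4, h5, h6, h7, h8, h9, h10, h11, h12, h13, h14, h15, h16, h17⟩ := h
  -- sorting rules among unstarred generators
  have Hba : b * a = a * b := h1.symm
  have Hca : c * a = a * c := h2.symm
  have Hda : d * a = a * d := h3.symm
  have Hcb : c * b = b * c := h4.symm
  have Hdb : d * b = b * d := h5.symm
  have Hdc : d * c = c * d := h6.symm
  -- determinant
  have Hdet : a * d = 1 + b * c := by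
    have := h7; linear_combination (norm := noncomm_ring) this
  -- sorting rules among starred generators (star of commutation relations)
  have Sba : star b * star a = star a * star b := by
    have := congrArg star h1; simpa [star_mul] using this
  have Sca : star c * star a = star a * star c := by
    have := congrArg star h2; simpa [star_mul] using this
  have Sda : star d * star a = star a * star d := by
    have := congrArg star h3; simpa [star_mul] using this
  have Scb : star c * star b = star b * star c := by
    have := congrArg star h4; simpa [star_mul] using this
  have Sdb : star d * star b = star b * star d := by
    have := congrArg star h5; simpa [star_mul] using this
  have Sdc : star d * star c = star c * star d := by
    have := congrArg star h6; simpa [star_mul] using this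
  have Sdet : star a * star d = 1 + star b * star c := by
    have := congrArg star h7
    simp only [star_sub, star_mul, star_one] at this
    rw [Sda, Scb] at this
    linear_combination (norm := noncomm_ring) this
  -- cross rules: unstarred * starred → starred * unstarred + correction
  have Xaa : a * star a = star a * a - s • (star c * c) := by
    linear_combination (norm := noncomm_ring) h8
  have Xab : a * star b = star b * a - s • (c * star d) := by
    linear_combination (norm := noncomm_ring) h9
  have Xac : a * star c = star c * a := h10
  have Xad : a * star d = star d * a := h11
  have Xbb : b * star b = star b * b + s • (star a * a - d * star d) := by
    linear_combination (norm := noncomm_ring) h12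
  have Xbc : b * star c = star c * b := h13
  have Xbd : b * star d = star d * b + s • (star c * a) := by
    linear_combination (norm := noncomm_ring) h14
  have Xcc : c * star c = star c * c := h15
  have Xcd : c * star d = star d * c := h16
  have Xdd : d * star d = star d * d + s • (c * star c) := by
    linear_combination (norm := noncomm_ring) h17
  -- starred versions of the cross relations
  have Xba : b * star a = star a * b - s • (d * star c) := by
    have := congrArg star h9
    simp only [star_sub, star_mul, star_neg, star_smul, star_star, star_trivial] at this
    linear_combination (norm := noncomm_ring) this
  have Xca : c * star a = star a * c := by
    have := congrArg star h10
    simpa [star_mul, star_star] using this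
  have Xda : d * star a = star a * d := by
    have := congrArg star h11
    simpa [star_mul, star_star] using this
  have Xcb : c * star b = star b * c := by
    have := congrArg star h13
    simpa [star_mul, star_star] using this
  have Xdb : d * star b = star b * d + s • (star a * c) := by
    have := congrArg star h14
    simp only [star_sub, star_mul, star_smul, star_star, star_trivial] at this
    linear_combination (norm := noncomm_ring) this
  have Xdc : d * star c = star c * d := by
    have := congrArg star h16
    simpa [star_mul, star_star] using this
  unfold HLRelWith starTensor starLM
  simp only [map_add, TensorProduct.map_tmul, LinearMap.coe_mk, AddHom.coe_mk]
  refine ⟨?_, ?_, ?_, ?_, ?_, ?_, ?_, ?_, ?_, ?_, ?_, ?_, ?_, ?_, ?_, ?_, ?_⟩ <;>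
  · simp only [mul_add, add_mul, mul_sub, sub_mul, smul_mul_assoc, mul_smul_comm,
      smul_sub, smul_add, smul_smul, mul_one, one_mul,
      Algebra.TensorProduct.tmul_mul_tmul, Algebra.TensorProduct.one_def,
      Hba, Hca, Hda, Hcb, Hdb, Hdc, Hdet, Sba, Sca, Sda, Scb, Sdb, Sdc, Sdet,
      Xaa, Xab, Xac, Xad, Xba, Xbb, Xbc, Xbd, Xca, Xcb, Xcc, Xcd, Xda, Xdb, Xdc, Xdd,
      TensorProduct.tmul_add, TensorProduct.add_tmul, TensorProduct.tmul_sub,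
      TensorProduct.sub_tmul, ← TensorProduct.smul_tmul', TensorProduct.tmul_smul]
    module
end

section
/- The coinverse relations hold: in the opposite algebra, the quadruple (d, −b, −c, a) satisfies the Heisenberg–Lorentz relations whenever (a, b, c, d) does; equivalently, the assignment κ(a) = d, κ(b) = −b, κ(c) = −c, κ(d) = a extends to a *-antihomomorphism of the Heisenberg–Lorentz *-algebra, and κ² = id on generators. -/
open MulOpposite in
theorem stmt_11 {A : Type*} [Ring A] [StarRing A] [Algebra ℂ A] [StarModule ℂ A]
    (s : ℝ) (a b c d : A) (h : HLRel s a b c d) :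
    HLRel s (op d) (-(op b)) (-(op c)) (op a) := by
  obtain ⟨h1, h2, h3, h4, h5, h6, h7, h8, h9, h10, h11, h12, h13, h14, h15, h16, h17⟩ := h
  have h9' : d * star b - star b * d = (s : ℂ) • (star a * c) := by
    have := congrArg star h14
    simpa [star_sub, star_mul, star_smul, Complex.star_def, Complex.conj_ofReal] using this
  have h14' : b * star a - star a * b = -((s : ℂ) • (d * star c)) := by
    have := congrArg star h9
    simpa [star_sub, star_mul, star_smul, Complex.star_def, Complex.conj_ofReal] using this
  have h10' : c * star a = star a * c := by
    simpa [star_mul] using congrArg star h10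
  have h11' : d * star a = star a * d := by
    simpa [star_mul] using congrArg star h11
  have h16' : d * star c = star c * d := by
    simpa [star_mul] using congrArg star h16
  refine ⟨?_, ?_, ?_, ?_, ?_, ?_, ?_, ?_, ?_, ?_, ?_, ?_, ?_, ?_, ?_, ?_, ?_⟩ <;>
    apply unop_injective <;>
    simp only [unop_mul, unop_neg, unop_star, unop_smul, unop_sub, unop_one, unop_op,
      neg_mul, mul_neg, neg_neg, star_neg]
  · rw [h5]
  · rw [h6]
  · rw [h3]
  · rw [h4]
  · rw [h1]
  · rw [h2]
  · rw [← h4]; exact h7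
  · rw [← neg_sub (d * star d), h17]
  · rw [neg_sub_neg, smul_neg, neg_neg]; exact h9'
  · rw [← h16']
  · exact h11'.symm
  · rw [← neg_sub (b * star b), h12, ← smul_neg, neg_sub]
  · exact h13.symm
  · rw [neg_sub_neg, h14', smul_neg]
  · exact h15.symm
  · rw [← h10']
  · rw [← neg_sub (a * star a), h8, neg_neg]
end

section
/- The function f : ℂ × ℂ → ℂ given by the double Gaussian–Fresnel integral f(α, δ) = ∫∫ h₁(z₁, −(s/2)γ²)·h₁(z₂, (s/2)γ²)·exp(i·Im(z₁α))·exp(i·Im(z₂δ)) d²z₁ d²z₂ equals (1/cosh²((s/2)γ²))·exp(−2(|α|² + |δ|²)·tanh((s/2)γ²)/(s·γ²)), where γ² > 0 and s ≠ 0 are fixed reals and h_t(z,x) = (x e^{tx}/(4π sinh tx))·exp(−|z|² x coth(tx)/4). -/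
open MeasureTheory Real Complex

lemma gauss1 (c : ℝ) (hc : 0 < c) (u : ℝ) :
    ∫ x : ℝ, Complex.exp (Complex.I * u * x) * Complex.exp (-(c : ℂ) * x ^ 2)
      = ((π / c : ℝ) : ℂ) ^ (1 / 2 : ℂ) * Complex.exp (-(((u : ℝ) ^ 2 / (4 * c) : ℝ) : ℂ)) := by
  have h := fourierIntegral_gaussian (b := (c : ℂ)) (by simpa using hc) (u : ℂ)
  rw [h]
  push_cast
  ring_nf

lemma gauss2 (c : ℝ) (hc : 0 < c) (β : ℂ) :
    ∫ z : ℂ, ((Real.exp (-(‖z‖ ^ 2 * c)) : ℝ) : ℂ) *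
        Complex.exp (Complex.I * ((z * β).im : ℂ))
      = ((π / c : ℝ) : ℂ) * Complex.exp (-((‖β‖ ^ 2 / (4 * c) : ℝ) : ℂ)) := by
  rw [← (Complex.volume_preserving_equiv_real_prod.symm).integral_comp
      Complex.measurableEquivRealProd.symm.measurableEmbedding]
  have heq : ∀ p : ℝ × ℝ,
      ((Real.exp (-(‖Complex.measurableEquivRealProd.symm p‖ ^ 2 * c)) : ℝ) : ℂ) *
        Complex.exp (Complex.I * (((Complex.measurableEquivRealProd.symm p) * β).im : ℂ))
      = (Complex.exp (Complex.I * (β.im : ℂ) * p.1) * Complex.exp (-(c : ℂ) * p.1 ^ 2)) *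
        (Complex.exp (Complex.I * (β.re : ℂ) * p.2) * Complex.exp (-(c : ℂ) * p.2 ^ 2)) := by
    intro p
    rw [Complex.measurableEquivRealProd_symm_apply]
    rw [← Complex.exp_add, ← Complex.exp_add, ← Complex.exp_add]
    have habs : ‖(⟨p.1, p.2⟩ : ℂ)‖ ^ 2 = p.1 ^ 2 + p.2 ^ 2 := by
      rw [Complex.sq_norm, Complex.normSq_mk]; ring
    have him : ((⟨p.1, p.2⟩ : ℂ) * β).im = p.1 * β.im + p.2 * β.re := by
      simp [Complex.mul_im]
    rw [habs, him]
    rw [Complex.ofReal_exp]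
    rw [← Complex.exp_add]
    push_cast
    congr 1
    ring
  simp_rw [heq]
  rw [MeasureTheory.Measure.volume_eq_prod,
    integral_prod_mul (f := fun x : ℝ => Complex.exp (Complex.I * (β.im : ℂ) * x) *
        Complex.exp (-(c : ℂ) * x ^ 2))
      (g := fun y : ℝ => Complex.exp (Complex.I * (β.re : ℂ) * y) *
        Complex.exp (-(c : ℂ) * y ^ 2)),
    gauss1 c hc β.im, gauss1 c hc β.re]
  have hne : ((π / c : ℝ) : ℂ) ≠ 0 := by
    simp only [ne_eq, Complex.ofReal_eq_zero]
    positivity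
  rw [show ((π / c : ℝ) : ℂ) ^ (1/2 : ℂ) * Complex.exp (-((β.im ^ 2 / (4*c) : ℝ) : ℂ)) *
      (((π / c : ℝ) : ℂ) ^ (1/2 : ℂ) * Complex.exp (-((β.re ^ 2 / (4*c) : ℝ) : ℂ)))
      = (((π / c : ℝ) : ℂ) ^ (1/2 : ℂ) * ((π / c : ℝ) : ℂ) ^ (1/2 : ℂ)) *
        (Complex.exp (-((β.im ^ 2 / (4*c) : ℝ) : ℂ)) * Complex.exp (-((β.re ^ 2 / (4*c) : ℝ) : ℂ)))
      from by ring]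
  rw [← Complex.cpow_add _ _ hne, ← Complex.exp_add]
  norm_num
  left
  congr 1
  have h2 : (‖β‖ : ℝ) ^ 2 = β.re ^ 2 + β.im ^ 2 := by
    rw [Complex.sq_norm, Complex.normSq_apply]; ring
  rw [show ((‖β‖ : ℝ) : ℂ) ^ 2 = (β.re : ℂ) ^ 2 + (β.im : ℂ) ^ 2 by
    rw [← Complex.ofReal_pow, h2]; push_cast; ring]
  ring

/-- `h_t(z,x) = (x e^{tx}/(4π sinh tx)) exp(−|z|² x coth(tx)/4)`. -/
noncomputable def hker (t : ℝ) (z : ℂ) (x : ℝ) : ℝ :=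
  (x * Real.exp (t * x) / (4 * Real.pi * Real.sinh (t * x))) *
    Real.exp (-(‖z‖ ^ 2 * x * (Real.cosh (t * x) / Real.sinh (t * x))) / 4)

theorem stmt_14 (s g : ℝ) (hs : s ≠ 0) (hg : 0 < g) (α δ : ℂ) :
    (∫ z₁ : ℂ, ∫ z₂ : ℂ,
        ((hker 1 z₁ (-(s / 2) * g) * hker 1 z₂ ((s / 2) * g) : ℝ) : ℂ) *
          Complex.exp (Complex.I * ((z₁ * α).im : ℂ)) *
          Complex.exp (Complex.I * ((z₂ * δ).im : ℂ))) =
      ((1 / (Real.cosh ((s / 2) * g)) ^ 2 : ℝ) : ℂ) *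
        Complex.exp
          (((-(2 * (‖α‖ ^ 2 + ‖δ‖ ^ 2) *
              Real.tanh ((s / 2) * g)) / (s * g) : ℝ) : ℂ)) := by
  have hm : s / 2 * g ≠ 0 := mul_ne_zero (div_ne_zero hs two_ne_zero) hg.ne'
  set m : ℝ := s / 2 * g with hmdef
  have hsinh : Real.sinh m ≠ 0 := Real.sinh_ne_zero.2 hm
  have hcosh : (0:ℝ) < Real.cosh m := Real.cosh_pos m
  have hdivpos : 0 < m / Real.sinh m := by
    rcases hm.lt_or_gt with h | h
    · exact div_pos_of_neg_of_neg h (Real.sinh_neg_iff.2 h)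
    · exact div_pos h (Real.sinh_pos_iff.2 h)
  set c : ℝ := m * (Real.cosh m / Real.sinh m) / 4 with hcdef
  have hc : 0 < c := by
    rw [hcdef, show m * (Real.cosh m / Real.sinh m) = Real.cosh m * (m / Real.sinh m) by ring]
    positivity
  set K₁ : ℝ := m * Real.exp (-m) / (4 * π * Real.sinh m) with hK₁
  set K₂ : ℝ := m * Real.exp m / (4 * π * Real.sinh m) with hK₂
  have h1 : ∀ z : ℂ, hker 1 z (-(s / 2) * g) = K₁ * Real.exp (-(‖z‖ ^ 2 * c)) := by
    intro z
    rw [hker, show -(s / 2) * g = -m by rw [hmdef]; ring]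
    rw [one_mul, Real.sinh_neg, Real.cosh_neg, hK₁, hcdef]
    congr 1
    · field_simp
    · congr 1
      field_simp
  have h2 : ∀ z : ℂ, hker 1 z ((s / 2) * g) = K₂ * Real.exp (-(‖z‖ ^ 2 * c)) := by
    intro z
    rw [hker, ← hmdef, one_mul, hK₂, hcdef]
    congr 1
    congr 1
    field_simp
  have key : ∀ z₁ z₂ : ℂ,
      ((hker 1 z₁ (-(s / 2) * g) * hker 1 z₂ ((s / 2) * g) : ℝ) : ℂ) *
          Complex.exp (Complex.I * ((z₁ * α).im : ℂ)) *
          Complex.exp (Complex.I * ((z₂ * δ).im : ℂ))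
        = ((K₁ : ℝ) : ℂ) * (((Real.exp (-(‖z₁‖ ^ 2 * c)) : ℝ) : ℂ) *
              Complex.exp (Complex.I * ((z₁ * α).im : ℂ))) *
          (((K₂ : ℝ) : ℂ) * (((Real.exp (-(‖z₂‖ ^ 2 * c)) : ℝ) : ℂ) *
              Complex.exp (Complex.I * ((z₂ * δ).im : ℂ)))) := by
    intro z₁ z₂
    rw [h1 z₁, h2 z₂]
    push_cast
    ring
  simp_rw [← hmdef] at key
  simp_rw [key, integral_const_mul]
  rw [integral_mul_const, integral_const_mul]
  rw [gauss2 c hc α, gauss2 c hc δ]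
  rw [show ((K₁ : ℝ) : ℂ) * (((π / c : ℝ) : ℂ) *
        Complex.exp (-((‖α‖ ^ 2 / (4 * c) : ℝ) : ℂ))) *
      (((K₂ : ℝ) : ℂ) * (((π / c : ℝ) : ℂ) *
        Complex.exp (-((‖δ‖ ^ 2 / (4 * c) : ℝ) : ℂ))))
      = (((K₁ * (π / c) * (K₂ * (π / c)) : ℝ)) : ℂ) *
        (Complex.exp (-((‖α‖ ^ 2 / (4 * c) : ℝ) : ℂ)) *
          Complex.exp (-((‖δ‖ ^ 2 / (4 * c) : ℝ) : ℂ))) by push_cast; ring]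
  rw [← Complex.exp_add, ← Complex.ofReal_neg, ← Complex.ofReal_neg, ← Complex.ofReal_add]
  have hconst : K₁ * (π / c) * (K₂ * (π / c)) = 1 / Real.cosh m ^ 2 := by
    rw [hK₁, hK₂, hcdef, Real.exp_neg]
    have := Real.exp_ne_zero m
    have := Real.pi_ne_zero
    field_simp
  have hexp : -(‖α‖ ^ 2 / (4 * c)) + -(‖δ‖ ^ 2 / (4 * c))
      = -(2 * (‖α‖ ^ 2 + ‖δ‖ ^ 2) * Real.tanh m) / (s * g) := by
    rw [hcdef, Real.tanh_eq_sinh_div_cosh, show s * g = 2 * m by rw [hmdef]; ring]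
    field_simp
    ring
  rw [hconst, hexp]
end
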